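/- Let B₁ and B₂ be real symmetric n × n matrices such that B₁ is positive semidefinite and the complex matrix B₁ + iB₂ is invertible. Then there exists c > 0 such that (1/2)·(B₁y·y) + |B₂y|² ≥ c·|y|² for all y ∈ ℝ^n. -/

import Mathlib

open Matrix

/-- if `B₁, B₂` are real symmetric matrices, `B₁` positive semidefinite,
and `B₁ + iB₂` invertible, then `(1/2) B₁y·y + |B₂y|² ≥ c|y|²` for some `c > 0`. -/
theorem quadratic_lower_bound_of_invertible
    (n : ℕ) (B₁ B₂ : Matrix (Fin n) (Fin n) ℝ)
    (h₁ : B₁.IsSymm) (h₂ : B₂.IsSymm) (hpsd : B₁.PosSemidef)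
    (hinv : IsUnit (B₁.map (Complex.ofReal) + Complex.I • B₂.map (Complex.ofReal))) :
    ∃ c > 0, ∀ y : Fin n → ℝ,
      c * (∑ i, y i ^ 2) ≤ (1/2) * ((B₁ *ᵥ y) ⬝ᵥ y) + ∑ i, (B₂ *ᵥ y) i ^ 2 := by
  -- the matrix of the quadratic form
  set M : Matrix (Fin n) (Fin n) ℝ := (1/2 : ℝ) • B₁ + B₂ᵀ * B₂ with hMdef
  -- quadratic form identity
  have hquad : ∀ y : Fin n → ℝ,
      y ⬝ᵥ M *ᵥ y = (1/2) * ((B₁ *ᵥ y) ⬝ᵥ y) + ∑ i, (B₂ *ᵥ y) i ^ 2 := by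
    intro y
    have h2 : y ⬝ᵥ (B₂ᵀ * B₂) *ᵥ y = (B₂ *ᵥ y) ⬝ᵥ (B₂ *ᵥ y) := by
      rw [← mulVec_mulVec, mulVec_transpose, dotProduct_mulVec]
      exact dotProduct_comm _ _
    rw [hMdef, add_mulVec, dotProduct_add, smul_mulVec, dotProduct_smul, h2]
    simp [dotProduct, dotProduct_comm y (B₁ *ᵥ y), pow_two, smul_eq_mul, mul_comm]
  -- M is symmetric
  have hMsym : M.IsHermitian := by
    have : Mᵀ = M := by
      rw [hMdef]
      simp [transpose_add, transpose_smul, transpose_mul, transpose_transpose, h₁.eq, h₂.eq]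
    exact (conjTranspose_eq_transpose_of_trivial M).trans this
  -- M is positive definite
  have hM : M.PosDef := by
    refine PosDef.of_dotProduct_mulVec_pos hMsym fun x hx => ?_
    have hx1 : (0:ℝ) ≤ (B₁ *ᵥ x) ⬝ᵥ x := by
      have := hpsd.dotProduct_mulVec_nonneg x
      simpa [dotProduct_comm] using this
    have hx2 : (0:ℝ) ≤ ∑ i, (B₂ *ᵥ x) i ^ 2 := Finset.sum_nonneg fun i _ => sq_nonneg _
    have hq := hquad x
    rcases lt_or_eq_of_le (by positivity : (0:ℝ) ≤ (1/2) * ((B₁ *ᵥ x) ⬝ᵥ x) + ∑ i, (B₂ *ᵥ x) i ^ 2)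
      with h | h
    · simpa [hq] using h
    exfalso
    -- both terms are zero
    have hz1 : (1/2) * ((B₁ *ᵥ x) ⬝ᵥ x) = 0 := by nlinarith
    have hz2 : ∑ i, (B₂ *ᵥ x) i ^ 2 = 0 := by nlinarith
    have hB1x : B₁ *ᵥ x = 0 := by
      have : x ⬝ᵥ B₁ *ᵥ x = 0 := by
        rw [dotProduct_comm]; linarith
      have := (hpsd.dotProduct_mulVec_zero_iff x).mp (by simpa using this)
      exact this
    have hB2x : B₂ *ᵥ x = 0 := by
      have : (B₂ *ᵥ x) ⬝ᵥ (B₂ *ᵥ x) = 0 := by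
        simpa [dotProduct, pow_two] using hz2
      exact dotProduct_self_eq_zero.mp this
    -- contradiction with invertibility
    have hinj := Matrix.mulVec_injective_iff_isUnit.mpr hinv
    have hxc : (B₁.map (Complex.ofReal) + Complex.I • B₂.map (Complex.ofReal)) *ᵥ
        (fun i => (x i : ℂ)) = 0 := by
      funext i
      have e1 : (B₁.map Complex.ofReal *ᵥ fun i => (x i : ℂ)) i = ((B₁ *ᵥ x) i : ℂ) :=
        (RingHom.map_mulVec Complex.ofRealHom B₁ x i).symm
      have e2 : (B₂.map Complex.ofReal *ᵥ fun i => (x i : ℂ)) i = ((B₂ *ᵥ x) i : ℂ) :=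
        (RingHom.map_mulVec Complex.ofRealHom B₂ x i).symm
      simp [add_mulVec, smul_mulVec, e1, e2, hB1x, hB2x]
    have : (fun i => (x i : ℂ)) = (0 : Fin n → ℂ) := by
      apply hinj
      simpa using hxc
    apply hx
    funext i
    have h' := congrFun this i
    simpa using h'
  -- handle n = 0
  rcases Nat.eq_zero_or_pos n with hn | hn
  · subst hn
    exact ⟨1, one_pos, fun y => by simp⟩
  haveI : Nonempty (Fin n) := ⟨⟨0, hn⟩⟩
  -- minimum eigenvalue
  obtain ⟨j, -, hj⟩ := Finset.exists_min_image Finset.univ hMsym.eigenvalues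
    ⟨Classical.arbitrary (Fin n), Finset.mem_univ _⟩
  set c := hMsym.eigenvalues j with hc
  have hcpos : 0 < c := hM.eigenvalues_pos j
  -- M - c • 1 is positive semidefinite
  have hpsdMc : (M - c • 1).PosSemidef := by
    set U : Matrix (Fin n) (Fin n) ℝ := (hMsym.eigenvectorUnitary : Matrix (Fin n) (Fin n) ℝ)
      with hU
    have hUU : U * star U = 1 := (Matrix.mem_unitaryGroup_iff).mp hMsym.eigenvectorUnitary.2
    have key : M - c • 1 =
        U * diagonal (fun i => hMsym.eigenvalues i - c) * star U := by
      have hspec := hMsym.spectral_theorem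
      simp only [Unitary.conjStarAlgAut_apply, Unitary.coe_star] at hspec
      have h1 : (c • 1 : Matrix (Fin n) (Fin n) ℝ) = U * (c • 1) * star U := by
        rw [mul_smul_comm, smul_mul_assoc, mul_one, hUU]
      calc M - c • 1 = U * diagonal (RCLike.ofReal ∘ hMsym.eigenvalues) * star U
            - U * (c • 1) * star U := by rw [← hspec, ← h1]
        _ = U * (diagonal (RCLike.ofReal ∘ hMsym.eigenvalues) - c • 1) * star U := by
            rw [mul_sub, sub_mul]
        _ = U * diagonal (fun i => hMsym.eigenvalues i - c) * star U := by
            congr 1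
            congr 1
            ext i k
            by_cases h : i = k <;>
              simp [Matrix.diagonal_apply, Matrix.one_apply, h]
    rw [key, Matrix.star_eq_conjTranspose]
    refine PosSemidef.mul_mul_conjTranspose_same ?_ U
    refine posSemidef_diagonal_iff.mpr fun i => ?_
    have := hj i (Finset.mem_univ i)
    linarith
  refine ⟨c, hcpos, fun y => ?_⟩
  have h0 := hpsdMc.dotProduct_mulVec_nonneg y
  have hdot : star y ⬝ᵥ (M - c • 1) *ᵥ y = y ⬝ᵥ M *ᵥ y - c * ∑ i, y i ^ 2 := by
    rw [sub_mulVec, dotProduct_sub, smul_mulVec, dotProduct_smul, one_mulVec]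
    simp [dotProduct, pow_two, smul_eq_mul, Finset.mul_sum]
  rw [hdot] at h0
  have : (0:ℝ) ≤ y ⬝ᵥ M *ᵥ y - c * ∑ i, y i ^ 2 := by simpa using h0
  linarith [hquad y, this]
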